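/- Let ν and μ be probability measures on ℝ, each absolutely continuous with respect to Lebesgue measure, with densities f_ν and f_μ. Let c > 0, k ≥ 0 and δ, δ' > 0, and suppose: f_ν(x) ≥ c for Lebesgue-a.e. x ∈ (−δ,δ); f_μ(x) ≤ k for Lebesgue-a.e. x ∈ (−δ',δ'); and F(0) = 1/2, where F(a) = ν((−∞,a]). Then for every real t with 0 ≤ t ≤ c·min(δ,δ'): μ{ z ∈ ℝ : |F(−z) − 1/2| < t } ≤ 2k·t/c. -/

import Mathlib

open MeasureTheory
open scoped ENNReal

theorem transition_condition_from_densities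
    (ν μ : Measure ℝ) [IsProbabilityMeasure ν] [IsProbabilityMeasure μ]
    (fν fμ : ℝ → ℝ≥0∞) (hfν : Measurable fν) (hfμ : Measurable fμ)
    (hν : ν = volume.withDensity fν)
    (hμ : μ = volume.withDensity fμ)
    (c k δ δ' : ℝ) (hc : 0 < c) (hk : 0 ≤ k) (hδ : 0 < δ) (hδ' : 0 < δ')
    (hlow : ∀ᵐ x ∂(volume : Measure ℝ), x ∈ Set.Ioo (-δ) δ → ENNReal.ofReal c ≤ fν x)
    (hupp : ∀ᵐ x ∂(volume : Measure ℝ), x ∈ Set.Ioo (-δ') δ' → fμ x ≤ ENNReal.ofReal k)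
    (hmed : (ν (Set.Iic 0)).toReal = 1/2)
    (t : ℝ) (ht0 : 0 ≤ t) (ht1 : t ≤ c * min δ δ') :
    (μ {z : ℝ | |(ν (Set.Iic (-z))).toReal - 1/2| < t}).toReal ≤ 2 * k * t / c := by
  set m := t / c with hmdef
  have hm0 : 0 ≤ m := div_nonneg ht0 hc.le
  have hmδ : m ≤ δ := by
    rw [hmdef, div_le_iff₀ hc]
    calc t ≤ c * min δ δ' := ht1
      _ ≤ δ * c := by nlinarith [min_le_left δ δ']
  have hmδ' : m ≤ δ' := by
    rw [hmdef, div_le_iff₀ hc]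
    calc t ≤ c * min δ δ' := ht1
      _ ≤ δ' * c := by nlinarith [min_le_right δ δ']
  have hcm : c * m = t := by
    rw [hmdef]; field_simp
  have keyν : ∀ a b : ℝ, -δ ≤ a → b ≤ δ → b - a = m → ENNReal.ofReal t ≤ ν (Set.Ioo a b) := by
    intro a b ha hb hab
    have hsub : Set.Ioo a b ⊆ Set.Ioo (-δ) δ := Set.Ioo_subset_Ioo ha hb
    have hmeas : MeasurableSet (Set.Ioo a b) := measurableSet_Ioo
    have h1 : ENNReal.ofReal c * volume (Set.Ioo a b) ≤ ν (Set.Ioo a b) := by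
      rw [hν, withDensity_apply _ hmeas, ← setLIntegral_const]
      refine setLIntegral_mono_ae hfν.aemeasurable ?_
      filter_upwards [hlow] with x hx hxs
      exact hx (hsub hxs)
    calc ENNReal.ofReal t = ENNReal.ofReal c * ENNReal.ofReal m := by
          rw [← ENNReal.ofReal_mul hc.le, hcm]
      _ = ENNReal.ofReal c * volume (Set.Ioo a b) := by
          rw [Real.volume_Ioo, hab]
      _ ≤ ν (Set.Ioo a b) := h1
  have hsubset : {z : ℝ | |(ν (Set.Iic (-z))).toReal - 1/2| < t} ⊆ Set.Ioo (-m) m := by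
    intro z hz
    simp only [Set.mem_setOf_eq] at hz
    constructor
    · by_contra h
      push_neg at h
      have h1 : ENNReal.ofReal t ≤ ν (Set.Ioo 0 m) := keyν 0 m (by linarith) hmδ (by ring)
      have hdisj : Disjoint (Set.Iic (0:ℝ)) (Set.Ioo 0 m) := by
        rw [Set.disjoint_left]; intro x hx hx2; exact absurd hx2.1 (not_lt.2 hx)
      have hunion : Set.Iic (0:ℝ) ∪ Set.Ioo 0 m ⊆ Set.Iic (-z) := by
        intro x hx
        simp only [Set.mem_union, Set.mem_Iic, Set.mem_Ioo] at hx ⊢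
        rcases hx with hx | hx
        · linarith
        · linarith
      have h2 : ν (Set.Iic 0) + ν (Set.Ioo 0 m) ≤ ν (Set.Iic (-z)) := by
        rw [← measure_union hdisj measurableSet_Ioo]
        exact measure_mono hunion
      have h3 : (ν (Set.Iic 0)).toReal + (ν (Set.Ioo 0 m)).toReal ≤ (ν (Set.Iic (-z))).toReal := by
        rw [← ENNReal.toReal_add (measure_ne_top ν _) (measure_ne_top ν _)]
        exact ENNReal.toReal_mono (measure_ne_top ν _) h2
      have h4 : t ≤ (ν (Set.Ioo 0 m)).toReal := by
        have := ENNReal.toReal_mono (measure_ne_top ν _) h1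
        rwa [ENNReal.toReal_ofReal ht0] at this
      rw [hmed] at h3
      have habs : t ≤ |(ν (Set.Iic (-z))).toReal - 1/2| := by
        calc t ≤ (ν (Set.Iic (-z))).toReal - 1/2 := by linarith
          _ ≤ |(ν (Set.Iic (-z))).toReal - 1/2| := le_abs_self _
      linarith
    · by_contra h
      push_neg at h
      have h1 : ENNReal.ofReal t ≤ ν (Set.Ioo (-m) 0) := keyν (-m) 0 (by linarith) hδ.le (by ring)
      have hdisj : Disjoint (Set.Iic (-z)) (Set.Ioo (-m) 0) := by
        rw [Set.disjoint_left]; intro x hx hx2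
        have h5 : -m < x := hx2.1
        have h6 : x ≤ -z := hx
        linarith
      have hunion : Set.Iic (-z) ∪ Set.Ioo (-m) 0 ⊆ Set.Iic (0:ℝ) := by
        intro x hx
        simp only [Set.mem_union, Set.mem_Iic, Set.mem_Ioo] at hx ⊢
        rcases hx with hx | hx
        · linarith
        · linarith
      have h2 : ν (Set.Iic (-z)) + ν (Set.Ioo (-m) 0) ≤ ν (Set.Iic 0) := by
        rw [← measure_union hdisj measurableSet_Ioo]
        exact measure_mono hunion
      have h3 : (ν (Set.Iic (-z))).toReal + (ν (Set.Ioo (-m) 0)).toReal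
          ≤ (ν (Set.Iic 0)).toReal := by
        rw [← ENNReal.toReal_add (measure_ne_top ν _) (measure_ne_top ν _)]
        exact ENNReal.toReal_mono (measure_ne_top ν _) h2
      have h4 : t ≤ (ν (Set.Ioo (-m) 0)).toReal := by
        have := ENNReal.toReal_mono (measure_ne_top ν _) h1
        rwa [ENNReal.toReal_ofReal ht0] at this
      rw [hmed] at h3
      have habs : t ≤ |(ν (Set.Iic (-z))).toReal - 1/2| := by
        calc t ≤ 1/2 - (ν (Set.Iic (-z))).toReal := by linarith
          _ ≤ |(ν (Set.Iic (-z))).toReal - 1/2| := by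
              rw [abs_sub_comm]; exact le_abs_self _
      linarith
  have hband : μ (Set.Ioo (-m) m) ≤ ENNReal.ofReal k * ENNReal.ofReal (2*m) := by
    have hsub : Set.Ioo (-m) m ⊆ Set.Ioo (-δ') δ' := Set.Ioo_subset_Ioo (by linarith) hmδ'
    rw [hμ, withDensity_apply _ measurableSet_Ioo]
    calc ∫⁻ x in Set.Ioo (-m) m, fμ x ∂volume
        ≤ ∫⁻ _ in Set.Ioo (-m) m, ENNReal.ofReal k ∂volume := by
          refine setLIntegral_mono_ae measurable_const.aemeasurable ?_
          filter_upwards [hupp] with x hx hxs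
          exact hx (hsub hxs)
      _ = ENNReal.ofReal k * volume (Set.Ioo (-m) m) := setLIntegral_const _ _
      _ = ENNReal.ofReal k * ENNReal.ofReal (2*m) := by
          rw [Real.volume_Ioo]; ring_nf
  calc (μ {z : ℝ | |(ν (Set.Iic (-z))).toReal - 1/2| < t}).toReal
      ≤ (μ (Set.Ioo (-m) m)).toReal :=
        ENNReal.toReal_mono (measure_ne_top μ _) (measure_mono hsubset)
    _ ≤ (ENNReal.ofReal k * ENNReal.ofReal (2*m)).toReal :=
        ENNReal.toReal_mono (by finiteness) hband
    _ = k * (2*m) := by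
        rw [ENNReal.toReal_mul, ENNReal.toReal_ofReal hk, ENNReal.toReal_ofReal (by linarith)]
    _ = 2 * k * t / c := by rw [hmdef]; ring
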